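/- Let m, λ, a be real constants. Define f(u,v) = cos²(a u), g(u,v) = 0, and r(u,v) = 2m − 4λ²uv + (1/32)(1 − cos(4au)) − (1/4)a²u². Then r and f satisfy the CGHS field equations: ∂_u∂_v r = −4λ², ∂_u∂_u r = −(∂_u f)², and ∂_v∂_v r = −(∂_v f)² (= 0) at every point (u,v) ∈ ℝ². -/

import Mathlib

/-- For the CGHS model with a single bounded real field
`f(u,v) = cos²(a u)`, ghost field `g = 0`, and
`r(u,v) = 2m − 4λ²uv + (1/32)(1 − cos(4au)) − (1/4)a²u²`, the CGHS field
equations `∂_u∂_v r = −4λ²`, `∂_u∂_u r = −(∂_u f)²`, `∂_v∂_v r = −(∂_v f)²`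
hold at every point of `ℝ²`. -/
theorem stmt_0 (m lam a : ℝ)
    (f : ℝ → ℝ → ℝ) (hf : f = fun u _ => Real.cos (a * u) ^ 2)
    (g : ℝ → ℝ → ℝ) (hg : g = fun _ _ => (0 : ℝ))
    (r : ℝ → ℝ → ℝ)
    (hr : r = fun u v =>
      2 * m - 4 * lam ^ 2 * u * v + (1 / 32) * (1 - Real.cos (4 * a * u))
        - (1 / 4) * a ^ 2 * u ^ 2) :
    ∀ u v : ℝ,
      deriv (fun x => deriv (fun y => r x y) v) u = -4 * lam ^ 2 ∧
      deriv (fun x => deriv (fun x' => r x' v) x) u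
        = -(deriv (fun x => f x v) u) ^ 2 ∧
      deriv (fun y => deriv (fun y' => r u y') y) v
        = -(deriv (fun y => f u y) v) ^ 2 := by
  subst hr hf hg
  intro u v
  -- derivative in v, for any x
  have hv : ∀ (x w : ℝ), deriv (fun y =>
      2 * m - 4 * lam ^ 2 * x * y + (1 / 32) * (1 - Real.cos (4 * a * x))
        - (1 / 4) * a ^ 2 * x ^ 2) w = -(4 * lam ^ 2 * x) := by
    intro x w
    have h : HasDerivAt (fun y : ℝ =>
        2 * m - 4 * lam ^ 2 * x * y + (1 / 32) * (1 - Real.cos (4 * a * x))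
          - (1 / 4) * a ^ 2 * x ^ 2) (-(4 * lam ^ 2 * x)) w := by
      have h1 : HasDerivAt (fun y : ℝ => 4 * lam ^ 2 * x * y) (4 * lam ^ 2 * x) w := by
        simpa using (hasDerivAt_id w).const_mul (4 * lam ^ 2 * x)
      have h2 := ((h1.const_sub (2 * m)).add_const
          ((1 / 32) * (1 - Real.cos (4 * a * x)))).sub_const ((1 / 4) * a ^ 2 * x ^ 2)
      simpa using h2
    exact h.deriv
  -- derivative in the first variable, for any x
  have hu : ∀ x : ℝ, deriv (fun x' =>
      2 * m - 4 * lam ^ 2 * x' * v + (1 / 32) * (1 - Real.cos (4 * a * x'))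
        - (1 / 4) * a ^ 2 * x' ^ 2) x
      = -(4 * lam ^ 2 * v) + a / 8 * Real.sin (4 * a * x) - a ^ 2 / 2 * x := by
    intro x
    have h1 : HasDerivAt (fun x' : ℝ => 4 * lam ^ 2 * x' * v) (4 * lam ^ 2 * v) x := by
      simpa using ((hasDerivAt_id x).const_mul (4 * lam ^ 2)).mul_const v
    have h2 : HasDerivAt (fun x' : ℝ => (1 / 32) * (1 - Real.cos (4 * a * x')))
        (a / 8 * Real.sin (4 * a * x)) x := by
      have hc : HasDerivAt (fun x' : ℝ => Real.cos (4 * a * x'))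
          (-Real.sin (4 * a * x) * (4 * a)) x := by
        simpa using ((hasDerivAt_id x).const_mul (4 * a)).cos
      have := (hc.const_sub 1).const_mul (1 / 32 : ℝ)
      exact this.congr_deriv (by ring)
    have h3 : HasDerivAt (fun x' : ℝ => (1 / 4) * a ^ 2 * x' ^ 2) (a ^ 2 / 2 * x) x := by
      have := (hasDerivAt_pow 2 x).const_mul ((1 / 4) * a ^ 2)
      exact this.congr_deriv (by norm_num; ring)
    exact (((h1.const_sub (2 * m)).add h2).sub h3).deriv
  refine ⟨?_, ?_, ?_⟩
  · -- ∂u∂v r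
    have : (fun x => deriv (fun y =>
        2 * m - 4 * lam ^ 2 * x * y + (1 / 32) * (1 - Real.cos (4 * a * x))
          - (1 / 4) * a ^ 2 * x ^ 2) v) = fun x => -(4 * lam ^ 2 * x) := by
      funext x; exact hv x v
    rw [this]
    have h := ((hasDerivAt_id u).const_mul (4 * lam ^ 2)).neg
    have := h.deriv
    simpa using this
  · -- ∂u∂u r
    have hfun : (fun x => deriv (fun x' =>
        2 * m - 4 * lam ^ 2 * x' * v + (1 / 32) * (1 - Real.cos (4 * a * x'))
          - (1 / 4) * a ^ 2 * x' ^ 2) x)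
        = fun x => -(4 * lam ^ 2 * v) + a / 8 * Real.sin (4 * a * x) - a ^ 2 / 2 * x := by
      funext x; exact hu x
    rw [hfun]
    have h2 : HasDerivAt (fun x : ℝ =>
        -(4 * lam ^ 2 * v) + a / 8 * Real.sin (4 * a * x) - a ^ 2 / 2 * x)
        (a ^ 2 / 2 * Real.cos (4 * a * u) - a ^ 2 / 2) u := by
      have hs : HasDerivAt (fun x : ℝ => a / 8 * Real.sin (4 * a * x))
          (a / 8 * (Real.cos (4 * a * u) * (4 * a))) u :=
        (by simpa using ((hasDerivAt_id u).const_mul (4 * a)).sin :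
          HasDerivAt (fun x : ℝ => Real.sin (4 * a * x)) (Real.cos (4 * a * u) * (4 * a)) u
          ).const_mul (a / 8)
      have hl : HasDerivAt (fun x : ℝ => a ^ 2 / 2 * x) (a ^ 2 / 2) u := by
        simpa using (hasDerivAt_id u).const_mul (a ^ 2 / 2)
      have := (hs.const_add (-(4 * lam ^ 2 * v))).sub hl
      exact this.congr_deriv (by ring)
    rw [h2.deriv]
    have hf2 : HasDerivAt (fun x : ℝ => Real.cos (a * x) ^ 2)
        (2 * Real.cos (a * u) ^ 1 * (-Real.sin (a * u) * a)) u := by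
      have hc : HasDerivAt (fun x : ℝ => Real.cos (a * x)) (-Real.sin (a * u) * a) u := by
        simpa using ((hasDerivAt_id u).const_mul a).cos
      exact hc.pow 2
    rw [hf2.deriv]
    have h4 : (4 : ℝ) * a * u = 2 * (2 * (a * u)) := by ring
    rw [h4, Real.cos_two_mul, Real.cos_two_mul]
    have hpy := Real.sin_sq_add_cos_sq (a * u)
    linear_combination (4 * a ^ 2 * Real.cos (a * u) ^ 2) * hpy
  · -- ∂v∂v r
    have : (fun y => deriv (fun y' =>
        2 * m - 4 * lam ^ 2 * u * y' + (1 / 32) * (1 - Real.cos (4 * a * u))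
          - (1 / 4) * a ^ 2 * u ^ 2) y) = fun _ => -(4 * lam ^ 2 * u) := by
      funext y; exact hv u y
    rw [this]
    simp
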